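/- Let n1, n2 ≥ 2 be integers, σ1, σ2 > 0, and let U, V be independent with U ~ χ²_{n1−1} and V ~ χ²_{n2−1}; set s1² = σ1² U/(n1 − 1), s2² = σ2² V/(n2 − 1), and for an integer k with 0 ≤ k < n2 − 1 define Σ̂_k = Σ_{j=0}^{k} M_{j/2}^{−1} (s1/s2)^j, where M_{j/2} = ((n2 − 1)/(n1 − 1))^{j/2} Γ((n1 + j − 1)/2) Γ((n2 − j − 1)/2) / (Γ((n1 − 1)/2) Γ((n2 − 1)/2)). Then Σ̂_k is integrable and E[Σ̂_k] = Σ_{j=0}^{k} (σ1/σ2)^j = (1 − (σ1/σ2)^{k+1})/(1 − σ1/σ2) when σ1 ≠ σ2; in particular, if additionally X̄2 is an integrable random variable with E[X̄2] = μ2, X̄1 is integrable with E[X̄1] = μ1, and (X̄1, X̄2) is independent of (s1, s2), then Â_k = X̄2 + (X̄1 − X̄2) Σ̂_k satisfies E[Â_k] = μ2 + (μ1 − μ2)(1 − (σ1/σ2)^{k+1})/(1 − σ1/σ2). -/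

import Mathlib

open MeasureTheory ProbabilityTheory
open Real Set

/-- The chi-square distribution with `ν` degrees of freedom: the Gamma distribution
with shape `ν/2` and rate `1/2`. -/
noncomputable def chiSquareMeasure (ν : ℝ) : Measure ℝ :=
  gammaMeasure (ν / 2) (1 / 2)

lemma my_integrableOn_rpow_mul_exp_neg {b r : ℝ} (hb : 0 < b) (hr : 0 < r) :
    IntegrableOn (fun x : ℝ => x ^ (b - 1) * Real.exp (-(r * x))) (Set.Ioi 0) := by
  have h0 := Real.GammaIntegral_convergent hb
  have h1 : IntegrableOn (fun x : ℝ => Real.exp (-(r * x)) * (r * x) ^ (b - 1)) (Ioi 0) := by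
    have := (integrableOn_Ioi_comp_mul_left_iff
      (fun x : ℝ => Real.exp (-x) * x ^ (b - 1)) 0 hr).mpr (by simpa using h0)
    simpa using this
  have h2 : IntegrableOn
      (fun x : ℝ => r ^ (b - 1) * (x ^ (b - 1) * Real.exp (-(r * x)))) (Ioi 0) := by
    apply h1.congr_fun ?_ measurableSet_Ioi
    intro x hx
    show Real.exp (-(r * x)) * (r * x) ^ (b - 1) = _
    rw [Real.mul_rpow hr.le (le_of_lt hx)]
    ring
  have h3 := h2.const_mul ((r : ℝ) ^ (b - 1))⁻¹
  have hrb : (r : ℝ) ^ (b - 1) ≠ 0 := (Real.rpow_pos_of_pos hr _).ne'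
  show Integrable _ _
  simpa [← mul_assoc, inv_mul_cancel₀ hrb] using h3

lemma my_gamma_rpow {a r p : ℝ} (ha : 0 < a) (hr : 0 < r) (hap : 0 < a + p) :
    Integrable (fun x : ℝ => x ^ p) (gammaMeasure a r) ∧
      ∫ x, x ^ p ∂(gammaMeasure a r) = Real.Gamma (a + p) / (Real.Gamma a * r ^ p) := by
  have hΓa := Real.Gamma_pos_of_pos ha
  have hΓap := Real.Gamma_pos_of_pos hap
  set c : ℝ := r ^ a / Real.Gamma a with hc
  have hcpos : 0 < c := by positivity
  have hIval : ∫ x in Set.Ioi (0 : ℝ), c * (x ^ (a + p - 1) * Real.exp (-(r * x)))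
      = Real.Gamma (a + p) / (Real.Gamma a * r ^ p) := by
    rw [MeasureTheory.integral_const_mul, integral_rpow_mul_exp_neg_mul_Ioi hap hr]
    rw [one_div, Real.inv_rpow hr.le, Real.rpow_add hr]
    have h1 : (r : ℝ) ^ a ≠ 0 := (Real.rpow_pos_of_pos hr _).ne'
    have h2 : (r : ℝ) ^ p ≠ 0 := (Real.rpow_pos_of_pos hr _).ne'
    field_simp [hc]
    rw [hc, div_mul_cancel₀ _ hΓa.ne']
  have hInt : IntegrableOn (fun x : ℝ => c * (x ^ (a + p - 1) * Real.exp (-(r * x))))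
      (Set.Ioi 0) := (my_integrableOn_rpow_mul_exp_neg hap hr).const_mul c
  have hL : ∫⁻ x, ENNReal.ofReal (x ^ p) ∂(gammaMeasure a r)
      = ENNReal.ofReal (Real.Gamma (a + p) / (Real.Gamma a * r ^ p)) := by
    have hpdf : Measurable (ProbabilityTheory.gammaPDF a r) :=
      (ProbabilityTheory.measurable_gammaPDFReal a r).ennreal_ofReal
    have hg' : Measurable fun x : ℝ => ENNReal.ofReal (x ^ p) :=
      (by fun_prop : Measurable fun x : ℝ => x ^ p).ennreal_ofReal
    rw [gammaMeasure, lintegral_withDensity_eq_lintegral_mul volume hpdf hg']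
    have h0 : ∀ᵐ x : ℝ ∂volume, x ≠ 0 := by
      have : ({0} : Set ℝ) = {x : ℝ | ¬ x ≠ 0} := by ext x; simp
      rw [ae_iff, ← this, Real.volume_singleton]
    have hae : (fun x : ℝ => (gammaPDF a r * fun x : ℝ => ENNReal.ofReal (x ^ p)) x)
        =ᵐ[volume] (Set.Ioi (0:ℝ)).indicator
          (fun x => ENNReal.ofReal (c * (x ^ (a + p - 1) * Real.exp (-(r * x))))) := by
      filter_upwards [h0] with x hx
      simp only [Pi.mul_apply]
      rcases lt_trichotomy x 0 with h | h | h
      · rw [ProbabilityTheory.gammaPDF_of_neg h, zero_mul,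
          Set.indicator_of_notMem (by simpa using not_lt.mpr h.le)]
      · exact absurd h hx
      · rw [Set.indicator_of_mem (Set.mem_Ioi.mpr h), ProbabilityTheory.gammaPDF_of_nonneg h.le,
          ← ENNReal.ofReal_mul (by positivity)]
        congr 1
        rw [hc, show a + p - 1 = (a - 1) + p by ring, Real.rpow_add h]
        ring
    rw [lintegral_congr_ae hae, lintegral_indicator measurableSet_Ioi _,
      ← ofReal_integral_eq_lintegral_ofReal hInt
        ((ae_restrict_iff' measurableSet_Ioi).mpr (ae_of_all _ fun x hx => by
          have hx0 : (0:ℝ) < x := hx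
          positivity)), hIval]
  have hmeas : AEStronglyMeasurable (fun x : ℝ => x ^ p) (gammaMeasure a r) :=
    (by fun_prop : Measurable fun x : ℝ => x ^ p).aestronglyMeasurable
  have hnn : 0 ≤ᵐ[gammaMeasure a r] fun x : ℝ => x ^ p := by
    have hIio : gammaMeasure a r (Set.Iio 0) = 0 := by
      rw [gammaMeasure, withDensity_apply _ measurableSet_Iio,
        ProbabilityTheory.lintegral_gammaPDF_of_nonpos le_rfl]
    have hpos : ∀ᵐ x : ℝ ∂(gammaMeasure a r), 0 ≤ x := by
      have : (Set.Iio (0:ℝ)) = {x : ℝ | ¬ 0 ≤ x} := by ext x; simp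
      rw [ae_iff, ← this, hIio]
    filter_upwards [hpos] with x hx
    exact Real.rpow_nonneg hx p
  have hfin : HasFiniteIntegral (fun x : ℝ => x ^ p) (gammaMeasure a r) :=
    (hasFiniteIntegral_iff_ofReal hnn).mpr (by rw [hL]; exact ENNReal.ofReal_lt_top)
  refine ⟨⟨hmeas, hfin⟩, ?_⟩
  rw [integral_eq_lintegral_of_nonneg_ae hnn hmeas, hL, ENNReal.toReal_ofReal (by positivity)]

lemma my_map_gamma_moment {Ω : Type*} [MeasurableSpace Ω] {P : Measure Ω}
    [IsProbabilityMeasure P] {U : Ω → ℝ} {a r p : ℝ}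
    (ha : 0 < a) (hr : 0 < r) (hap : 0 < a + p)
    (hU : Measure.map U P = gammaMeasure a r) :
    Integrable (fun ω => U ω ^ p) P ∧
      ∫ ω, U ω ^ p ∂P = Real.Gamma (a + p) / (Real.Gamma a * r ^ p) := by
  have hPm : IsProbabilityMeasure (gammaMeasure a r) := isProbabilityMeasure_gammaMeasure ha hr
  have hUae : AEMeasurable U P := by
    by_contra h
    rw [Measure.map_of_not_aemeasurable h] at hU
    have h1 := hPm.measure_univ
    rw [← hU] at h1
    simp at h1
  have hg : Measurable fun x : ℝ => x ^ p := by fun_prop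
  obtain ⟨hint, hval⟩ := my_gamma_rpow ha hr hap
  constructor
  · exact (integrable_map_measure hg.aestronglyMeasurable hUae).mp (hU ▸ hint)
  · calc ∫ ω, U ω ^ p ∂P = ∫ x, x ^ p ∂(Measure.map U P) :=
          (MeasureTheory.integral_map hUae hg.aestronglyMeasurable).symm
      _ = _ := by rw [hU]; exact hval



lemma sqrt_pow_eq_rpow {x : ℝ} (h : 0 ≤ x) (j : ℕ) :
    Real.sqrt x ^ j = x ^ ((j : ℝ) / 2) := by
  rw [Real.sqrt_eq_rpow, ← Real.rpow_natCast (x ^ (1/2 : ℝ)) j, ← Real.rpow_mul h]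
  ring_nf


set_option maxHeartbeats 1600000 in
/-- With `U ~ χ²_{n1-1}`, `V ~ χ²_{n2-1}` independent, sample standard deviations
`s1, s2 ≥ 0` with `s1² = σ1² U/(n1-1)`, `s2² = σ2² V/(n2-1)`, and
`Σ̂_k = ∑_{j=0}^k M_{j/2}⁻¹ (s1/s2)^j` for `0 ≤ k < n2 - 1`,
`Σ̂_k` is integrable with `E[Σ̂_k] = ∑_{j=0}^k (σ1/σ2)^j`, which equals
`(1 - (σ1/σ2)^(k+1))/(1 - σ1/σ2)` when `σ1 ≠ σ2`; and if moreover `X̄1, X̄2` are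
integrable with means `μ1, μ2` and `(X̄1, X̄2)` is independent of `(s1, s2)`, then
`Â_k = X̄2 + (X̄1 - X̄2) Σ̂_k` has
`E[Â_k] = μ2 + (μ1 - μ2)(1 - (σ1/σ2)^(k+1))/(1 - σ1/σ2)`. -/
theorem stmt13 {Ω : Type*} [MeasurableSpace Ω] (P : Measure Ω) [IsProbabilityMeasure P]
    (n1 n2 : ℕ) (hn1 : 2 ≤ n1) (hn2 : 2 ≤ n2)
    (σ1 σ2 : ℝ) (hσ1 : 0 < σ1) (hσ2 : 0 < σ2)
    (U V : Ω → ℝ)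
    (hU : Measure.map U P = chiSquareMeasure ((n1 : ℝ) - 1))
    (hV : Measure.map V P = chiSquareMeasure ((n2 : ℝ) - 1))
    (hUV : IndepFun U V P)
    (s1 s2 : Ω → ℝ)
    (hs1_nonneg : ∀ ω, 0 ≤ s1 ω) (hs2_nonneg : ∀ ω, 0 ≤ s2 ω)
    (hs1 : ∀ ω, s1 ω ^ 2 = σ1 ^ 2 * U ω / ((n1 : ℝ) - 1))
    (hs2 : ∀ ω, s2 ω ^ 2 = σ2 ^ 2 * V ω / ((n2 : ℝ) - 1))
    (k : ℕ) (hk : k < n2 - 1)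
    (M : ℕ → ℝ)
    (hM : ∀ j : ℕ, M j =
      (((n2 : ℝ) - 1) / ((n1 : ℝ) - 1)) ^ ((j : ℝ) / 2) *
        (Real.Gamma (((n1 : ℝ) + j - 1) / 2) * Real.Gamma (((n2 : ℝ) - j - 1) / 2) /
          (Real.Gamma (((n1 : ℝ) - 1) / 2) * Real.Gamma (((n2 : ℝ) - 1) / 2))))
    (Shat : Ω → ℝ)
    (hShat : ∀ ω, Shat ω = ∑ j ∈ Finset.range (k + 1), (M j)⁻¹ * (s1 ω / s2 ω) ^ j) :
    Integrable Shat P ∧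
      ∫ ω, Shat ω ∂P = ∑ j ∈ Finset.range (k + 1), (σ1 / σ2) ^ j ∧
      (σ1 ≠ σ2 →
        ∫ ω, Shat ω ∂P = (1 - (σ1 / σ2) ^ (k + 1)) / (1 - σ1 / σ2)) ∧
      (∀ (μ1 μ2 : ℝ) (X1 X2 : Ω → ℝ),
        Integrable X1 P → Integrable X2 P →
        ∫ ω, X1 ω ∂P = μ1 → ∫ ω, X2 ω ∂P = μ2 →
        IndepFun (fun ω => (X1 ω, X2 ω)) (fun ω => (s1 ω, s2 ω)) P →
        σ1 ≠ σ2 →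
          Integrable (fun ω => X2 ω + (X1 ω - X2 ω) * Shat ω) P ∧
            ∫ ω, (X2 ω + (X1 ω - X2 ω) * Shat ω) ∂P =
              μ2 + (μ1 - μ2) * ((1 - (σ1 / σ2) ^ (k + 1)) / (1 - σ1 / σ2))) := by
  have c1 : (0:ℝ) < (n1:ℝ) - 1 := by
    have : (2:ℝ) ≤ n1 := by exact_mod_cast hn1
    linarith
  have c2 : (0:ℝ) < (n2:ℝ) - 1 := by
    have : (2:ℝ) ≤ n2 := by exact_mod_cast hn2
    linarith
  have ha1 : (0:ℝ) < ((n1:ℝ) - 1) / 2 := by linarith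
  have ha2 : (0:ℝ) < ((n2:ℝ) - 1) / 2 := by linarith
  have hU' : Measure.map U P = gammaMeasure (((n1:ℝ) - 1) / 2) (1/2) := hU
  have hV' : Measure.map V P = gammaMeasure (((n2:ℝ) - 1) / 2) (1/2) := hV
  -- nonnegativity of U and V
  have hUnn : ∀ ω, 0 ≤ U ω := by
    intro ω
    have h := hs1 ω
    have key : σ1 ^ 2 * U ω = s1 ω ^ 2 * ((n1:ℝ) - 1) := by
      rw [h]; field_simp
    nlinarith [sq_nonneg (s1 ω), pow_pos hσ1 2]
  have hVnn : ∀ ω, 0 ≤ V ω := by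
    intro ω
    have h := hs2 ω
    have key : σ2 ^ 2 * V ω = s2 ω ^ 2 * ((n2:ℝ) - 1) := by
      rw [h]; field_simp
    nlinarith [sq_nonneg (s2 ω), pow_pos hσ2 2]
  -- expressions for s1 and s2
  have hs1eq : ∀ ω, s1 ω = σ1 * Real.sqrt (U ω / ((n1:ℝ) - 1)) := by
    intro ω
    have h1 : 0 ≤ U ω / ((n1:ℝ) - 1) := div_nonneg (hUnn ω) c1.le
    have hsq : (σ1 * Real.sqrt (U ω / ((n1:ℝ) - 1))) ^ 2 = s1 ω ^ 2 := by
      rw [mul_pow, Real.sq_sqrt h1, hs1 ω]; ring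
    have hnn : 0 ≤ σ1 * Real.sqrt (U ω / ((n1:ℝ) - 1)) :=
      mul_nonneg hσ1.le (Real.sqrt_nonneg _)
    nlinarith [hs1_nonneg ω]
  have hs2eq : ∀ ω, s2 ω = σ2 * Real.sqrt (V ω / ((n2:ℝ) - 1)) := by
    intro ω
    have h1 : 0 ≤ V ω / ((n2:ℝ) - 1) := div_nonneg (hVnn ω) c2.le
    have hsq : (σ2 * Real.sqrt (V ω / ((n2:ℝ) - 1))) ^ 2 = s2 ω ^ 2 := by
      rw [mul_pow, Real.sq_sqrt h1, hs2 ω]; ring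
    have hnn : 0 ≤ σ2 * Real.sqrt (V ω / ((n2:ℝ) - 1)) :=
      mul_nonneg hσ2.le (Real.sqrt_nonneg _)
    nlinarith [hs2_nonneg ω]
  -- the pointwise identity
  have hterm : ∀ (j : ℕ) (ω : Ω), (s1 ω / s2 ω) ^ j
      = (σ1/σ2) ^ j * (((n2:ℝ) - 1)/((n1:ℝ) - 1)) ^ ((j:ℝ)/2) *
          (U ω ^ ((j:ℝ)/2) * V ω ^ (-((j:ℝ)/2))) := by
    intro j ω
    rcases Nat.eq_zero_or_pos j with rfl | hjpos
    · simp
    rcases eq_or_lt_of_le (hVnn ω) with hV0 | hVpos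
    · have hs20 : s2 ω = 0 := by rw [hs2eq ω, ← hV0]; simp
      have hj2 : -((j:ℝ)/2) ≠ 0 := by
        have : (0:ℝ) < (j:ℝ) := by exact_mod_cast hjpos
        intro hcon; rw [neg_eq_zero, div_eq_zero_iff] at hcon
        rcases hcon with h | h
        · linarith
        · norm_num at h
      rw [hs20, div_zero, zero_pow hjpos.ne', ← hV0, Real.zero_rpow hj2]
      ring
    · rw [hs1eq ω, hs2eq ω]
      have hU2 : 0 ≤ U ω / ((n1:ℝ) - 1) := div_nonneg (hUnn ω) c1.le
      have hV2 : 0 < V ω / ((n2:ℝ) - 1) := div_pos hVpos c2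
      rw [div_pow, mul_pow, mul_pow, sqrt_pow_eq_rpow hU2, sqrt_pow_eq_rpow hV2.le,
        Real.div_rpow (hUnn ω) c1.le, Real.div_rpow (hVnn ω) c2.le,
        Real.div_rpow c2.le c1.le, div_pow, Real.rpow_neg (hVnn ω)]
      have h1 : ((n1:ℝ) - 1) ^ ((j:ℝ)/2) ≠ 0 := (Real.rpow_pos_of_pos c1 _).ne'
      have h2 : ((n2:ℝ) - 1) ^ ((j:ℝ)/2) ≠ 0 := (Real.rpow_pos_of_pos c2 _).ne'
      have h3 : V ω ^ ((j:ℝ)/2) ≠ 0 := (Real.rpow_pos_of_pos hVpos _).ne'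
      have h4 : σ2 ^ j ≠ 0 := (pow_pos hσ2 j).ne'
      field_simp
  -- per-term integrability and integral
  have hTj : ∀ j, j ≤ k →
      Integrable (fun ω => (M j)⁻¹ * (s1 ω / s2 ω) ^ j) P ∧
        ∫ ω, (M j)⁻¹ * (s1 ω / s2 ω) ^ j ∂P = (σ1/σ2) ^ j := by
    intro j hj
    have hjlt : (j:ℝ) < (n2:ℝ) - 1 := by
      have : j + 2 ≤ n2 := by omega
      have := (Nat.cast_le (α := ℝ)).mpr this
      push_cast at this
      linarith
    have hap1 : (0:ℝ) < ((n1:ℝ) - 1) / 2 + (j:ℝ)/2 := by positivity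
    have hap2 : (0:ℝ) < ((n2:ℝ) - 1) / 2 + (-((j:ℝ)/2)) := by linarith
    have hUm := my_map_gamma_moment (P := P) ha1 (by norm_num : (0:ℝ) < 1/2) hap1 hU'
    have hVm := my_map_gamma_moment (P := P) ha2 (by norm_num : (0:ℝ) < 1/2) hap2 hV'
    have hIndep : IndepFun (fun ω => U ω ^ ((j:ℝ)/2)) (fun ω => V ω ^ (-((j:ℝ)/2))) P :=
      hUV.comp (φ := fun x : ℝ => x ^ ((j:ℝ)/2)) (ψ := fun x : ℝ => x ^ (-((j:ℝ)/2)))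
        (by fun_prop) (by fun_prop)
    have hprod := hIndep.integrable_mul hUm.1 hVm.1
    have hintmul := hIndep.integral_mul_eq_mul_integral hUm.1.aestronglyMeasurable hVm.1.aestronglyMeasurable
    set C : ℝ := (M j)⁻¹ * ((σ1/σ2) ^ j * (((n2:ℝ) - 1)/((n1:ℝ) - 1)) ^ ((j:ℝ)/2)) with hC
    have hfun : (fun ω => (M j)⁻¹ * (s1 ω / s2 ω) ^ j)
        = fun ω => C * (U ω ^ ((j:ℝ)/2) * V ω ^ (-((j:ℝ)/2))) := by
      funext ω; rw [hterm j ω, hC]; ring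
    constructor
    · rw [hfun]; exact hprod.const_mul C
    · rw [hfun]
      rw [MeasureTheory.integral_const_mul]
      have : ∫ ω, U ω ^ ((j:ℝ)/2) * V ω ^ (-((j:ℝ)/2)) ∂P
          = (∫ ω, U ω ^ ((j:ℝ)/2) ∂P) * ∫ ω, V ω ^ (-((j:ℝ)/2)) ∂P := hintmul
      rw [this, hUm.2, hVm.2]
      -- algebra
      have e1 : ((n1:ℝ) - 1)/2 + (j:ℝ)/2 = ((n1:ℝ) + j - 1)/2 := by ring
      have e2 : ((n2:ℝ) - 1)/2 + (-((j:ℝ)/2)) = ((n2:ℝ) - j - 1)/2 := by ring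
      have hhalf : ((1:ℝ)/2) ^ ((j:ℝ)/2) * ((1:ℝ)/2) ^ (-((j:ℝ)/2)) = 1 := by
        rw [← Real.rpow_add (by norm_num)]
        simp
      have hG1 : 0 < Real.Gamma (((n1:ℝ) + j - 1)/2) := Real.Gamma_pos_of_pos (by linarith)
      have hG2 : 0 < Real.Gamma (((n2:ℝ) - j - 1)/2) := Real.Gamma_pos_of_pos (by linarith)
      have hG3 : 0 < Real.Gamma (((n1:ℝ) - 1)/2) := Real.Gamma_pos_of_pos ha1
      have hG4 : 0 < Real.Gamma (((n2:ℝ) - 1)/2) := Real.Gamma_pos_of_pos ha2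
      have hD : (0:ℝ) < (((n2:ℝ) - 1)/((n1:ℝ) - 1)) ^ ((j:ℝ)/2) :=
        Real.rpow_pos_of_pos (by positivity) _
      have hh1 : (0:ℝ) < ((1:ℝ)/2) ^ ((j:ℝ)/2) := Real.rpow_pos_of_pos (by norm_num) _
      have hh2 : (0:ℝ) < ((1:ℝ)/2) ^ (-((j:ℝ)/2)) := Real.rpow_pos_of_pos (by norm_num) _
      have hMj : M j = (((n2:ℝ) - 1)/((n1:ℝ) - 1)) ^ ((j:ℝ)/2) *
          (Real.Gamma (((n1:ℝ) + j - 1)/2) * Real.Gamma (((n2:ℝ) - j - 1)/2) /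
            (Real.Gamma (((n1:ℝ) - 1)/2) * Real.Gamma (((n2:ℝ) - 1)/2))) := hM j
      have hMpos : 0 < M j := by rw [hMj]; positivity
      rw [hC, hMj, e1, e2]
      set q : ℝ := (σ1/σ2) ^ j with hqdef
      set D : ℝ := (((n2:ℝ) - 1)/((n1:ℝ) - 1)) ^ ((j:ℝ)/2) with hDdef
      set A : ℝ := ((1:ℝ)/2) ^ ((j:ℝ)/2) with hAdef
      set B : ℝ := ((1:ℝ)/2) ^ (-((j:ℝ)/2)) with hBdef
      set G1 : ℝ := Real.Gamma (((n1:ℝ) + j - 1)/2) with hG1def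
      set G2 : ℝ := Real.Gamma (((n2:ℝ) - j - 1)/2) with hG2def
      set G3 : ℝ := Real.Gamma (((n1:ℝ) - 1)/2) with hG3def
      set G4 : ℝ := Real.Gamma (((n2:ℝ) - 1)/2) with hG4def
      clear_value q D A B G1 G2 G3 G4
      have expand : (D * (G1 * G2 / (G3 * G4)))⁻¹ * (q * D) * (G1 / (G3 * A) * (G2 / (G4 * B)))
          = q * (A * B)⁻¹ := by
        field_simp
      rw [expand, hhalf]
      simp
  -- integrability of Shat and its integral
  have hShatfun : Shat = fun ω => ∑ j ∈ Finset.range (k+1), (M j)⁻¹ * (s1 ω / s2 ω) ^ j :=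
    funext hShat
  have hShatInt : Integrable Shat P := by
    rw [hShatfun]
    exact integrable_finset_sum _ (fun j hj => (hTj j (Nat.lt_succ_iff.mp (Finset.mem_range.mp hj))).1)
  have hShatIntegral : ∫ ω, Shat ω ∂P = ∑ j ∈ Finset.range (k+1), (σ1/σ2) ^ j := by
    rw [hShatfun, integral_finset_sum _
      (fun j hj => (hTj j (Nat.lt_succ_iff.mp (Finset.mem_range.mp hj))).1)]
    exact Finset.sum_congr rfl fun j hj =>
      (hTj j (Nat.lt_succ_iff.mp (Finset.mem_range.mp hj))).2
  have hgeom : σ1 ≠ σ2 → ∑ j ∈ Finset.range (k+1), (σ1/σ2) ^ j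
      = (1 - (σ1/σ2) ^ (k+1)) / (1 - σ1/σ2) := by
    intro hne
    have hq : σ1/σ2 ≠ 1 := by
      intro h
      exact hne ((div_eq_one_iff_eq hσ2.ne').mp h)
    set qq : ℝ := σ1/σ2 with hqq
    clear_value qq
    rw [geom_sum_eq hq]
    have h1 : qq - 1 ≠ 0 := sub_ne_zero.mpr hq
    have h2 : (1:ℝ) - qq ≠ 0 := fun hh => h1 (by linarith)
    field_simp
    ring
  refine ⟨hShatInt, hShatIntegral, ?_, ?_⟩
  · intro hne
    rw [hShatIntegral, hgeom hne]
  · intro μ1 μ2 X1 X2 hX1 hX2 hμ1 hμ2 hI hne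
    set g : ℝ × ℝ → ℝ := fun q => ∑ j ∈ Finset.range (k+1), (M j)⁻¹ * (q.1/q.2) ^ j with hg
    have hgmeas : Measurable g := by
      apply Finset.measurable_sum
      intro j hj
      exact ((measurable_fst.div measurable_snd).pow_const j).const_mul _
    have hφmeas : Measurable (fun q : ℝ × ℝ => q.1 - q.2) := measurable_fst.sub measurable_snd
    have hI2 := hI.comp hφmeas hgmeas
    have hgS : (g ∘ fun ω => (s1 ω, s2 ω)) = Shat := by
      funext ω
      simp only [Function.comp, hg, hShat ω]
    have hI3 : IndepFun (fun ω => X1 ω - X2 ω) Shat P := by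
      rw [← hgS]
      exact hI2
    have hmul : Integrable (fun ω => (X1 ω - X2 ω) * Shat ω) P :=
      hI3.integrable_mul (hX1.sub hX2) hShatInt
    have hmulval : ∫ ω, (X1 ω - X2 ω) * Shat ω ∂P
        = (∫ ω, (X1 ω - X2 ω) ∂P) * ∫ ω, Shat ω ∂P :=
      hI3.integral_mul_eq_mul_integral (hX1.sub hX2).aestronglyMeasurable hShatInt.aestronglyMeasurable
    refine ⟨hX2.add hmul, ?_⟩
    rw [integral_add hX2 hmul, hmulval, integral_sub hX1 hX2, hμ1, hμ2, hShatIntegral,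
      hgeom hne]
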